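/- For two fully-connected layers with the same 1-Lipschitz activation $\sigma$, $\|\mathrm{FC}^{\sigma}_{W,b}(x) - \mathrm{FC}^{\sigma}_{W',b'}(x)\|_\infty \le (\|W\|_0 + \|W'\|_0)\|W - W'\|_\infty \|x\|_\infty + \|b - b'\|_\infty$ for any input $x$. -/

import Mathlib

noncomputable section
open Finset

namespace CNNPaper

/-- ReLU activation. -/
def relu (u : ℝ) : ℝ := max u 0

/-- One-sided padding, stride-one convolution operator `L^w`. -/
def conv (D K I J : ℕ) (w : Fin K → Fin J → Fin I → ℝ)
    (x : Fin D → Fin I → ℝ) : Fin D → Fin J → ℝ :=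
  fun β j => ∑ α : Fin D, ∑ i : Fin I,
    (if h : (β : ℕ) ≤ (α : ℕ) ∧ (α : ℕ) - (β : ℕ) < K
      then w ⟨(α : ℕ) - (β : ℕ), h.2⟩ j i else 0) * x α i

/-- sup (entrywise maximal absolute value) norm of a finite family of reals. -/
def supNorm {ι : Type*} [Fintype ι] (f : ι → ℝ) : ℝ := ⨆ i, |f i|

/-- sup norm of a vector. -/
def vNorm {n : ℕ} (v : Fin n → ℝ) : ℝ := supNorm v

/-- sup norm of a matrix / signal. -/
def mNorm {D I : ℕ} (x : Fin D → Fin I → ℝ) : ℝ :=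
  supNorm (fun p : Fin D × Fin I => x p.1 p.2)

/-- sup norm of a filter. -/
def wNorm {K J I : ℕ} (w : Fin K → Fin J → Fin I → ℝ) : ℝ :=
  supNorm (fun p : Fin K × Fin J × Fin I => w p.1 p.2.1 p.2.2)

/-- Operator norm of `L^w` with respect to sup norms. -/
def convOpNorm (D K I J : ℕ) (w : Fin K → Fin J → Fin I → ℝ) : ℝ :=
  ⨆ x : {x : Fin D → Fin I → ℝ // mNorm x ≤ 1}, mNorm (conv D K I J w x.1)

/-- A convolutional layer `x ↦ σ(L^w(x) - 1_D ⊗ b)`. -/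
def convLayer (D K I J : ℕ) (σ : ℝ → ℝ) (w : Fin K → Fin J → Fin I → ℝ)
    (b : Fin J → ℝ) (x : Fin D → Fin I → ℝ) : Fin D → Fin J → ℝ :=
  fun β j => σ (conv D K I J w x β j - b j)

/-- A stack of convolutional layers; the activation may depend on the layer index. -/
def forwardσ (D : ℕ) (C K : ℕ → ℕ) (σ : ℕ → ℝ → ℝ)
    (w : (l : ℕ) → Fin (K l) → Fin (C (l + 1)) → Fin (C l) → ℝ)
    (b : (l : ℕ) → Fin (C (l + 1)) → ℝ) :
    (n : ℕ) → (Fin D → Fin (C 0) → ℝ) → Fin D → Fin (C n) → ℝ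
  | 0, x => x
  | n + 1, x => convLayer D (K n) (C n) (C (n + 1)) (σ n) (w n) (b n)
      (forwardσ D C K σ w b n x)

/-- A stack of convolutional layers with a common activation. -/
def forward (D : ℕ) (C K : ℕ → ℕ) (σ : ℝ → ℝ)
    (w : (l : ℕ) → Fin (K l) → Fin (C (l + 1)) → Fin (C l) → ℝ)
    (b : (l : ℕ) → Fin (C (l + 1)) → ℝ) (n : ℕ)
    (x : Fin D → Fin (C 0) → ℝ) : Fin D → Fin (C n) → ℝ :=
  forwardσ D C K (fun _ => σ) w b n x

/-- Activation pattern of a residual block of depth `L`: ReLU except on the last layer. -/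
def blockσ (L : ℕ) : ℕ → ℝ → ℝ := fun l => if l + 1 = L then (id : ℝ → ℝ) else relu

/-- A fully-connected layer `x ↦ σ(W vec(x) - b)`. -/
def fcLayer (D C C' : ℕ) (σ : ℝ → ℝ) (W : Fin C' → Fin D → Fin C → ℝ)
    (b : Fin C' → ℝ) (x : Fin D → Fin C → ℝ) : Fin C' → ℝ :=
  fun j => σ ((∑ β : Fin D, ∑ i : Fin C, W j β i * x β i) - b j)

/-- `‖W‖₀`: the number of non-zero entries of `W`. -/
def l0Norm {C' D C : ℕ} (W : Fin C' → Fin D → Fin C → ℝ) : ℕ :=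
  (Finset.univ.filter (fun p : Fin C' × Fin D × Fin C => W p.1 p.2.1 p.2.2 ≠ 0)).card

lemma supNorm_nonneg {ι : Type*} [Fintype ι] (f : ι → ℝ) : 0 ≤ supNorm f :=
  Real.iSup_nonneg fun i => abs_nonneg _

lemma le_supNorm {ι : Type*} [Fintype ι] (f : ι → ℝ) (i : ι) : |f i| ≤ supNorm f :=
  le_ciSup (f := fun i => |f i|) (Set.Finite.bddAbove (Set.finite_range _)) i

lemma supNorm_le {ι : Type*} [Fintype ι] (f : ι → ℝ) (M : ℝ) (hM : 0 ≤ M)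
    (h : ∀ i, |f i| ≤ M) : supNorm f ≤ M :=
  Real.iSup_le h hM

/-- difference bound for two fully-connected layers with the same
`1`-Lipschitz activation. -/
theorem fcLayer_param_diff (D C C' : ℕ) (σ : ℝ → ℝ)
    (hσ : ∀ u v : ℝ, |σ u - σ v| ≤ |u - v|)
    (W W' : Fin C' → Fin D → Fin C → ℝ) (b b' : Fin C' → ℝ) (x : Fin D → Fin C → ℝ) :
    vNorm (fun j => fcLayer D C C' σ W b x j - fcLayer D C C' σ W' b' x j) ≤
      ((l0Norm W : ℝ) + (l0Norm W' : ℝ)) * wNorm (fun j β i => W j β i - W' j β i) * mNorm x +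
        vNorm (fun j => b j - b' j) := by
  have hw0 : (0:ℝ) ≤ wNorm (fun j β i => W j β i - W' j β i) := supNorm_nonneg _
  have hm0 : (0:ℝ) ≤ mNorm x := supNorm_nonneg _
  have hb0 : (0:ℝ) ≤ vNorm (fun j => b j - b' j) := supNorm_nonneg _
  have hN0 : (0:ℝ) ≤ ((l0Norm W : ℝ) + (l0Norm W' : ℝ)) := by positivity
  refine supNorm_le _ _ (by positivity) fun j => ?_
  have key : |fcLayer D C C' σ W b x j - fcLayer D C C' σ W' b' x j| ≤
      |((∑ β : Fin D, ∑ i : Fin C, W j β i * x β i) - b j) -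
        ((∑ β : Fin D, ∑ i : Fin C, W' j β i * x β i) - b' j)| := hσ _ _
  have tri : |((∑ β : Fin D, ∑ i : Fin C, W j β i * x β i) - b j) -
        ((∑ β : Fin D, ∑ i : Fin C, W' j β i * x β i) - b' j)| ≤
      |∑ β : Fin D, ∑ i : Fin C, (W j β i - W' j β i) * x β i| + |b j - b' j| := by
    have : ((∑ β : Fin D, ∑ i : Fin C, W j β i * x β i) - b j) -
        ((∑ β : Fin D, ∑ i : Fin C, W' j β i * x β i) - b' j) =
        (∑ β : Fin D, ∑ i : Fin C, (W j β i - W' j β i) * x β i) - (b j - b' j) := by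
      simp_rw [sub_mul, Finset.sum_sub_distrib]
      ring
    rw [this]
    exact abs_sub _ _
  -- bound the sum
  set Δ := wNorm (fun j β i => W j β i - W' j β i) with hΔ
  set m := mNorm x with hm
  have hsum : |∑ β : Fin D, ∑ i : Fin C, (W j β i - W' j β i) * x β i| ≤
      ((l0Norm W : ℝ) + (l0Norm W' : ℝ)) * Δ * m := by
    have h1 : |∑ β : Fin D, ∑ i : Fin C, (W j β i - W' j β i) * x β i| ≤
        ∑ p ∈ Finset.univ.filter (fun p : Fin D × Fin C => W j p.1 p.2 - W' j p.1 p.2 ≠ 0),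
          |(W j p.1 p.2 - W' j p.1 p.2) * x p.1 p.2| := by
      have heq : (∑ β : Fin D, ∑ i : Fin C, (W j β i - W' j β i) * x β i) =
          ∑ p : Fin D × Fin C, (W j p.1 p.2 - W' j p.1 p.2) * x p.1 p.2 :=
        (Fintype.sum_prod_type (f := fun p : Fin D × Fin C =>
          (W j p.1 p.2 - W' j p.1 p.2) * x p.1 p.2)).symm
      rw [heq]
      refine (Finset.abs_sum_le_sum_abs _ _).trans ?_
      rw [← Finset.sum_filter_ne_zero]
      apply Finset.sum_le_sum_of_subset_of_nonneg
      · intro p hp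
        simp only [Finset.mem_filter, Finset.mem_univ, true_and] at hp ⊢
        intro h; exact hp (by rw [h, zero_mul, abs_zero])
      · intro p _ _; exact abs_nonneg _
    have h2 : ∀ p : Fin D × Fin C, |(W j p.1 p.2 - W' j p.1 p.2) * x p.1 p.2| ≤ Δ * m := by
      intro p
      rw [abs_mul]
      exact mul_le_mul (le_supNorm (fun q : Fin C' × Fin D × Fin C => W q.1 q.2.1 q.2.2 - W' q.1 q.2.1 q.2.2) ⟨j, p⟩)
        (le_supNorm (fun q : Fin D × Fin C => x q.1 q.2) p) (abs_nonneg _) (hw0.trans_eq rfl)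
    have hcard : ((Finset.univ.filter (fun p : Fin D × Fin C => W j p.1 p.2 - W' j p.1 p.2 ≠ 0)).card : ℝ)
        ≤ (l0Norm W : ℝ) + (l0Norm W' : ℝ) := by
      have hinj : (Finset.univ.filter (fun p : Fin D × Fin C => W j p.1 p.2 - W' j p.1 p.2 ≠ 0)).card ≤
          (Finset.univ.filter (fun q : Fin C' × Fin D × Fin C => W q.1 q.2.1 q.2.2 - W' q.1 q.2.1 q.2.2 ≠ 0)).card := by
        apply Finset.card_le_card_of_injOn (fun p => (j, p))
        · intro p hp
          simp only [Finset.mem_coe, Finset.mem_filter, Finset.mem_univ, true_and] at hp ⊢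
          exact hp
        · intro p _ q _ h
          exact (Prod.mk.injEq _ _ _ _ ▸ h).2
      have hsub : (Finset.univ.filter (fun q : Fin C' × Fin D × Fin C => W q.1 q.2.1 q.2.2 - W' q.1 q.2.1 q.2.2 ≠ 0)).card ≤
          l0Norm W + l0Norm W' := by
        unfold l0Norm
        refine le_trans (Finset.card_le_card ?_) (Finset.card_union_le _ _)
        intro q hq
        simp only [Finset.mem_filter, Finset.mem_union, Finset.mem_univ, true_and] at hq ⊢
        by_contra hc
        push_neg at hc
        exact hq (by rw [hc.1, hc.2, sub_zero])
      exact_mod_cast hinj.trans hsub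
    calc |∑ β : Fin D, ∑ i : Fin C, (W j β i - W' j β i) * x β i| ≤
        ∑ p ∈ Finset.univ.filter (fun p : Fin D × Fin C => W j p.1 p.2 - W' j p.1 p.2 ≠ 0),
          |(W j p.1 p.2 - W' j p.1 p.2) * x p.1 p.2| := h1
      _ ≤ ∑ _p ∈ Finset.univ.filter (fun p : Fin D × Fin C => W j p.1 p.2 - W' j p.1 p.2 ≠ 0), Δ * m :=
          Finset.sum_le_sum fun p _ => h2 p
      _ = ((Finset.univ.filter (fun p : Fin D × Fin C => W j p.1 p.2 - W' j p.1 p.2 ≠ 0)).card : ℝ) * (Δ * m) := by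
          rw [Finset.sum_const, nsmul_eq_mul]
      _ ≤ ((l0Norm W : ℝ) + (l0Norm W' : ℝ)) * (Δ * m) :=
          mul_le_mul_of_nonneg_right hcard (by positivity)
      _ = ((l0Norm W : ℝ) + (l0Norm W' : ℝ)) * Δ * m := by ring
  have hbj : |b j - b' j| ≤ vNorm (fun j => b j - b' j) := by
    unfold vNorm; exact le_supNorm (fun j => b j - b' j) j
  calc |fcLayer D C C' σ W b x j - fcLayer D C C' σ W' b' x j|
      ≤ |∑ β : Fin D, ∑ i : Fin C, (W j β i - W' j β i) * x β i| + |b j - b' j| := key.trans tri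
    _ ≤ ((l0Norm W : ℝ) + (l0Norm W' : ℝ)) * Δ * m + vNorm (fun j => b j - b' j) :=
        add_le_add hsum hbj

end CNNPaper
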